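/- Let p0 ∈ (1,∞) and let X̂_{p0} be the first generation space with τ_n = ⌊(n+1)^{p0}/n⌋ and F(n,i) = n. Then for every p ∈ [1, p0), the centered maximal operator M^c is not of weak type (p,p): for f_n = δ_{x_n}, one has ‖M^c f_n‖_{p,∞}^p / ‖f_n‖_p^p ≥ n τ_n / (2(n+1))^p → ∞ as n → ∞. -/

import Mathlib

open scoped ENNReal Classical
open Filter Set

/-- The point set of a first generation space: roots `x_n` (`Sum.inl n`) and
leaves `x_{n,i}` (`Sum.inr ⟨n, i⟩`, `i` among `τ n` leaves of branch `n`). -/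
abbrev XPt (τ : ℕ → ℕ) := ℕ ⊕ (Σ n : ℕ, Fin (τ n))

namespace FirstGen

/-- The root `x_n`. -/
def root (τ : ℕ → ℕ) (n : ℕ) : XPt τ := Sum.inl n

/-- The leaf `x_{n,i}`. -/
def leaf (τ : ℕ → ℕ) (n : ℕ) (i : Fin (τ n)) : XPt τ := Sum.inr ⟨n, i⟩

/-- The branch `S_n = {x_n, x_{n,1}, …, x_{n,τ_n}}`. -/
def branch (τ : ℕ → ℕ) (n : ℕ) : Set (XPt τ) :=
  {x | x = root τ n ∨ ∃ i, x = leaf τ n i}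

/-- The two-point set `{x_n, x_{n,i}}`. -/
def pairB (τ : ℕ → ℕ) (n : ℕ) (i : Fin (τ n)) : Set (XPt τ) :=
  {root τ n, leaf τ n i}

/-- The collection of all open balls of `X_τ`: singletons, pairs `{x_n, x_{n,i}}`,
branches `S_n` and the whole space. -/
def balls (τ : ℕ → ℕ) : Set (Set (XPt τ)) :=
  {B | (∃ x, B = {x}) ∨ (∃ n i, B = pairB τ n i) ∨ (∃ n, B = branch τ n) ∨ B = Set.univ}

/-- The ball `B(x, 3/2)` centered at `x`. -/
def cball (τ : ℕ → ℕ) : XPt τ → Set (XPt τ)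
  | Sum.inl n => branch τ n
  | Sum.inr ⟨n, i⟩ => pairB τ n i

/-- The weight (measure of the singleton): `μ({x_n}) = d n`,
`μ({x_{n,i}}) = d n * F n i`. -/
noncomputable def weight (τ : ℕ → ℕ) (d : ℕ → ℝ≥0∞)
    (F : (n : ℕ) → Fin (τ n) → ℝ≥0∞) : XPt τ → ℝ≥0∞
  | Sum.inl n => d n
  | Sum.inr ⟨n, i⟩ => d n * F n i

/-- Measure of a set. -/
noncomputable def mass {τ : ℕ → ℕ} (w : XPt τ → ℝ≥0∞) (s : Set (XPt τ)) : ℝ≥0∞ :=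
  ∑' x : s, w x.1

/-- Average `A_s(f)` of `f` over `s`. -/
noncomputable def avg {τ : ℕ → ℕ} (w f : XPt τ → ℝ≥0∞) (s : Set (XPt τ)) : ℝ≥0∞ :=
  (∑' x : s, f x.1 * w x.1) / mass w s

/-- The centered Hardy–Littlewood maximal operator of `X_τ` (the three balls
centered at `x` are `{x}`, `cball τ x` and the whole space). -/
noncomputable def Mc {τ : ℕ → ℕ} (w f : XPt τ → ℝ≥0∞) (x : XPt τ) : ℝ≥0∞ :=
  avg w f {x} ⊔ avg w f (cball τ x) ⊔ avg w f Set.univ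

/-- The non-centered Hardy–Littlewood maximal operator of `X_τ`. -/
noncomputable def Mnc {τ : ℕ → ℕ} (w f : XPt τ → ℝ≥0∞) (x : XPt τ) : ℝ≥0∞ :=
  ⨆ (B : Set (XPt τ)) (_ : B ∈ balls τ) (_ : x ∈ B), avg w f B

/-- `‖f‖_p^p = ∑_x f(x)^p μ({x})`. -/
noncomputable def lpp {τ : ℕ → ℕ} (w : XPt τ → ℝ≥0∞) (p : ℝ) (f : XPt τ → ℝ≥0∞) : ℝ≥0∞ :=
  ∑' x, f x ^ p * w x

/-- `T` is of strong type `(p,p)` (stated on the level of `p`-th powers). -/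
def strongT {τ : ℕ → ℕ} (w : XPt τ → ℝ≥0∞)
    (T : (XPt τ → ℝ≥0∞) → XPt τ → ℝ≥0∞) (p : ℝ) : Prop :=
  ∃ C : ℝ≥0∞, C ≠ ∞ ∧ ∀ f, lpp w p (T f) ≤ C * lpp w p f

/-- `T` is of weak type `(p,p)` (stated on the level of `p`-th powers). -/
def weakT {τ : ℕ → ℕ} (w : XPt τ → ℝ≥0∞)
    (T : (XPt τ → ℝ≥0∞) → XPt τ → ℝ≥0∞) (p : ℝ) : Prop :=
  ∃ C : ℝ≥0∞, C ≠ ∞ ∧ ∀ f (l : ℝ≥0∞), l ^ p * mass w {x | l < T f x} ≤ C * lpp w p f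

/-- `‖g‖_{p,∞}^p`. -/
noncomputable def wnormP {τ : ℕ → ℕ} (w : XPt τ → ℝ≥0∞) (p : ℝ) (g : XPt τ → ℝ≥0∞) : ℝ≥0∞ :=
  ⨆ l : ℝ≥0∞, l ^ p * mass w {x | l < g x}

/-- The Dirac function `δ_{x_n}`. -/
noncomputable def dirac (τ : ℕ → ℕ) (n : ℕ) : XPt τ → ℝ≥0∞ :=
  fun x => if x = root τ n then 1 else 0

end FirstGen

open FirstGen


section AuxFirstGen
open FirstGen

lemma my_tsum_pair {α : Type*} (g : α → ℝ≥0∞) {a b : α} (h : a ≠ b) :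
    ∑' x : ({a, b} : Set α), g x.1 = g a + g b := by
  have hs : ({a, b} : Set α) = (({a, b} : Finset α) : Set α) := by simp
  rw [hs, Finset.tsum_subtype', Finset.sum_pair h]

lemma my_mass_mono {τ : ℕ → ℕ} (w : XPt τ → ℝ≥0∞) {s t : Set (XPt τ)} (h : s ⊆ t) :
    mass w s ≤ mass w t := by
  rw [mass, mass, tsum_subtype, tsum_subtype]
  exact ENNReal.tsum_le_tsum fun a =>
    Set.indicator_le_indicator_of_subset h (fun _ => zero_le) a

lemma root_ne_leaf {τ : ℕ → ℕ} (n : ℕ) (i : Fin (τ n)) : root τ n ≠ leaf τ n i := by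
  simp [root, leaf]

lemma leaf_inj {τ : ℕ → ℕ} (n : ℕ) : Function.Injective (leaf τ n) := by
  intro i j h
  simp only [leaf, Sum.inr.injEq, Sigma.mk.inj_iff, heq_eq_eq, true_and] at h
  exact h

variable (p : ℝ) (τ : ℕ → ℕ) (d : ℕ → ℝ≥0∞) (F : (n : ℕ) → Fin (τ n) → ℝ≥0∞)

lemma lpp_dirac (hp : 0 < p) (n : ℕ) :
    lpp (weight τ d F) p (dirac τ n) = d n := by
  rw [lpp, tsum_eq_single (root τ n) ?_]
  · simp [dirac, weight, root, ENNReal.one_rpow]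
  · intro x hx
    simp [dirac, hx, ENNReal.zero_rpow_of_pos hp]

lemma mass_pair (n : ℕ) (i : Fin (τ n)) (hF : ∀ n i, F n i = (n : ℝ≥0∞) + 1) :
    mass (weight τ d F) (pairB τ n i) = d n * ((n : ℝ≥0∞) + 2) := by
  rw [mass, pairB, my_tsum_pair _ (root_ne_leaf n i)]
  simp only [weight, root, leaf, hF]
  ring

lemma mass_leaves (n : ℕ) (hF : ∀ n i, F n i = (n : ℝ≥0∞) + 1) :
    mass (weight τ d F) (Set.range (leaf τ n))
      = (τ n : ℝ≥0∞) * (d n * ((n : ℝ≥0∞) + 1)) := by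
  rw [mass, tsum_range _ (leaf_inj n)]
  simp only [weight, leaf, hF]
  rw [tsum_fintype]
  simp [Finset.sum_const, Finset.card_univ, mul_comm]

lemma Mc_leaf_ge (n : ℕ) (i : Fin (τ n)) (hd : ∀ n, 0 < d n ∧ d n ≠ ∞)
    (hF : ∀ n i, F n i = (n : ℝ≥0∞) + 1) :
    ((n : ℝ≥0∞) + 2)⁻¹ ≤ Mc (weight τ d F) (dirac τ n) (leaf τ n i) := by
  have h1 : avg (weight τ d F) (dirac τ n) (cball τ (leaf τ n i))
      ≤ Mc (weight τ d F) (dirac τ n) (leaf τ n i) := le_sup_of_le_left le_sup_right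
  refine le_trans (le_of_eq ?_) h1
  have hc : cball τ (leaf τ n i) = pairB τ n i := rfl
  rw [hc, avg, mass_pair τ d F n i hF, pairB,
    my_tsum_pair (fun y => dirac τ n y * weight τ d F y) (root_ne_leaf n i)]
  have hroot : dirac τ n (root τ n) = 1 := if_pos rfl
  have hleaf : dirac τ n (leaf τ n i) = 0 := if_neg (root_ne_leaf n i).symm
  rw [hroot, hleaf, one_mul, zero_mul, add_zero]
  show ((n : ℝ≥0∞) + 2)⁻¹ = weight τ d F (root τ n) / (d n * ((n : ℝ≥0∞) + 2))
  have hw : weight τ d F (root τ n) = d n := rfl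
  rw [hw, div_eq_mul_inv,
    ENNReal.mul_inv (Or.inl (hd n).1.ne') (Or.inl (hd n).2), ← mul_assoc,
    ENNReal.mul_inv_cancel (hd n).1.ne' (hd n).2, one_mul]

lemma part1_tendsto (p0 : ℝ) (hp : 1 ≤ p) (hpp0 : p < p0)
    (hτ : ∀ n : ℕ, τ n = ⌊((n : ℝ) + 2) ^ p0 / ((n : ℝ) + 1)⌋₊) :
    Tendsto (fun n : ℕ => (((n : ℝ) + 1) * (τ n : ℝ)) / (2 * ((n : ℝ) + 2)) ^ p)
      atTop atTop := by
  have hlow : ∀ n : ℕ, (((n : ℝ) + 2) ^ (p0 - p) - 1) / 2 ^ p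
      ≤ (((n : ℝ) + 1) * (τ n : ℝ)) / (2 * ((n : ℝ) + 2)) ^ p := by
    intro n
    have hn1 : (0:ℝ) < (n : ℝ) + 1 := by positivity
    have hn2 : (0:ℝ) < (n : ℝ) + 2 := by positivity
    have hA : ((n : ℝ) + 2) ^ p0 - ((n : ℝ) + 1) ≤ ((n : ℝ) + 1) * (τ n : ℝ) := by
      have hf : ((n : ℝ) + 2) ^ p0 / ((n : ℝ) + 1) - 1 ≤ (τ n : ℝ) := by
        rw [hτ n]; exact (Nat.sub_one_lt_floor _).le
      have h2 := mul_le_mul_of_nonneg_left hf hn1.le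
      have hcan : ((n : ℝ) + 1) * (((n : ℝ) + 2) ^ p0 / ((n : ℝ) + 1) - 1)
          = ((n : ℝ) + 2) ^ p0 - ((n : ℝ) + 1) := by
        field_simp
      linarith [hcan ▸ h2]
    have e2 : (2 * ((n : ℝ) + 2)) ^ p = 2 ^ p * ((n : ℝ) + 2) ^ p :=
      Real.mul_rpow (by norm_num) hn2.le
    have e1 : ((n : ℝ) + 2) ^ (p0 - p) * ((n : ℝ) + 2) ^ p = ((n : ℝ) + 2) ^ p0 := by
      rw [← Real.rpow_add hn2]; ring_nf
    have e3 : (n : ℝ) + 1 ≤ ((n : ℝ) + 2) ^ p := by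
      calc (n : ℝ) + 1 ≤ (n : ℝ) + 2 := by linarith
        _ = ((n : ℝ) + 2) ^ (1:ℝ) := (Real.rpow_one _).symm
        _ ≤ ((n : ℝ) + 2) ^ p := Real.rpow_le_rpow_of_exponent_le (by linarith) hp
    have h2p : (0:ℝ) < 2 ^ p := by positivity
    have hnp : (0:ℝ) < ((n : ℝ) + 2) ^ p := by positivity
    rw [div_le_div_iff₀ h2p (by rw [e2]; positivity)]
    calc (((n : ℝ) + 2) ^ (p0 - p) - 1) * (2 * ((n : ℝ) + 2)) ^ p
        = (((n : ℝ) + 2) ^ p0 - ((n : ℝ) + 2) ^ p) * 2 ^ p := by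
          rw [e2]; nlinarith [e1]
      _ ≤ (((n : ℝ) + 1) * (τ n : ℝ)) * 2 ^ p := by nlinarith
  have t1 : Tendsto (fun n : ℕ => (n : ℝ) + 2) atTop atTop :=
    tendsto_atTop_add_const_right _ 2 tendsto_natCast_atTop_atTop
  have t2 : Tendsto (fun n : ℕ => ((n : ℝ) + 2) ^ (p0 - p)) atTop atTop :=
    (tendsto_rpow_atTop (by linarith)).comp t1
  have t3 : Tendsto (fun n : ℕ => (((n : ℝ) + 2) ^ (p0 - p) - 1) / 2 ^ p) atTop atTop :=
    (tendsto_atTop_add_const_right _ (-1) t2).atTop_div_const (by positivity)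
  exact tendsto_atTop_mono hlow t3

end AuxFirstGen

/-- in the first generation space `X̂_{p₀}` (`p₀ > 1`; branch `n` here
is the paper's branch `n+1`, with `τ n = ⌊(n+2)^{p₀}/(n+1)⌋` leaves, each of weight
`(n+1) d n`, masses of branches halving and `d 0 = 1`), for every `1 ≤ p < p₀` the
centered maximal operator is not of weak type `(p,p)`: for `f_n = δ_{x_n}` one has
`‖M^c f_n‖_{p,∞}^p ≥ ((n+1) τ n / (2(n+2))^p) ‖f_n‖_p^p` and this ratio tends to
infinity. -/
theorem Xhat_cen_not_weak (p0 p : ℝ) (hp0 : 1 < p0) (hp : 1 ≤ p) (hpp0 : p < p0)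
    (τ : ℕ → ℕ) (hτ : ∀ n : ℕ, τ n = ⌊((n : ℝ) + 2) ^ p0 / ((n : ℝ) + 1)⌋₊)
    (d : ℕ → ℝ≥0∞) (hd : ∀ n, 0 < d n ∧ d n ≠ ∞) (hd1 : d 0 = 1)
    (F : (n : ℕ) → Fin (τ n) → ℝ≥0∞) (hF : ∀ n i, F n i = (n : ℝ≥0∞) + 1)
    (hhalf : ∀ n, mass (weight τ d F) (branch τ (n + 1))
      = mass (weight τ d F) (branch τ n) / 2) :
    (Tendsto (fun n : ℕ => (((n : ℝ) + 1) * (τ n : ℝ)) / (2 * ((n : ℝ) + 2)) ^ p)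
      atTop atTop) ∧
    (∀ n : ℕ,
      (((n : ℝ≥0∞) + 1) * (τ n : ℝ≥0∞)) / ((2 * ((n : ℝ≥0∞) + 2)) ^ p)
          * lpp (weight τ d F) p (dirac τ n)
        ≤ wnormP (weight τ d F) p (Mc (weight τ d F) (dirac τ n))) ∧
    ¬ weakT (weight τ d F) (Mc (weight τ d F)) p := by
  have hp' : (0:ℝ) < p := lt_of_lt_of_le one_pos hp
  have h1 := part1_tendsto p τ p0 hp hpp0 hτ
  have h2 : ∀ n : ℕ,
      (((n : ℝ≥0∞) + 1) * (τ n : ℝ≥0∞)) / ((2 * ((n : ℝ≥0∞) + 2)) ^ p)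
          * lpp (weight τ d F) p (dirac τ n)
        ≤ wnormP (weight τ d F) p (Mc (weight τ d F) (dirac τ n)) := by
    intro n
    set w := weight τ d F with hwdef
    set l : ℝ≥0∞ := (2 * ((n : ℝ≥0∞) + 2))⁻¹ with hldef
    have hn2top : ((n : ℝ≥0∞) + 2) ≠ ∞ := by
      simp [ENNReal.add_eq_top]
    have hllt : l < ((n : ℝ≥0∞) + 2)⁻¹ := by
      rw [hldef]
      apply ENNReal.inv_lt_inv.mpr
      rw [two_mul]
      exact ENNReal.lt_add_right hn2top (by simp)
    have hsub : Set.range (leaf τ n) ⊆ {x | l < Mc w (dirac τ n) x} := by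
      rintro x ⟨i, rfl⟩
      exact lt_of_lt_of_le hllt (Mc_leaf_ge τ d F n i hd hF)
    have key : (((n : ℝ≥0∞) + 1) * (τ n : ℝ≥0∞)) / ((2 * ((n : ℝ≥0∞) + 2)) ^ p) * d n
        = l ^ p * mass w (Set.range (leaf τ n)) := by
      rw [mass_leaves τ d F n hF, hldef, ENNReal.inv_rpow, div_eq_mul_inv]
      ring
    rw [lpp_dirac p τ d F hp' n, key]
    calc l ^ p * mass w (Set.range (leaf τ n))
        ≤ l ^ p * mass w {x | l < Mc w (dirac τ n) x} :=
          mul_le_mul_of_nonneg_left (my_mass_mono w hsub) (by positivity)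
      _ ≤ wnormP w p (Mc w (dirac τ n)) :=
          le_iSup (fun l' : ℝ≥0∞ => l' ^ p * mass w {x | l' < Mc w (dirac τ n) x}) l
  refine ⟨h1, h2, ?_⟩
  rintro ⟨C, hCt, hC⟩
  have hub : ∀ n : ℕ,
      (((n : ℝ≥0∞) + 1) * (τ n : ℝ≥0∞)) / ((2 * ((n : ℝ≥0∞) + 2)) ^ p) ≤ C := by
    intro n
    have hw : wnormP (weight τ d F) p (Mc (weight τ d F) (dirac τ n))
        ≤ C * lpp (weight τ d F) p (dirac τ n) :=
      iSup_le fun l => hC (dirac τ n) l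
    have h3 := (h2 n).trans hw
    rw [lpp_dirac p τ d F hp' n] at h3
    exact (ENNReal.mul_le_mul_iff_left (hd n).1.ne' (hd n).2).mp h3
  have hreal : ∀ n : ℕ,
      (((n : ℝ) + 1) * (τ n : ℝ)) / (2 * ((n : ℝ) + 2)) ^ p ≤ C.toReal := by
    intro n
    have h := ENNReal.toReal_mono hCt (hub n)
    rw [ENNReal.toReal_div, ← ENNReal.toReal_rpow] at h
    have e0 : (((n : ℝ≥0∞) + 1)).toReal = (n : ℝ) + 1 := by
      rw [ENNReal.toReal_add (by simp) (by simp)]; simp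
    have e0' : (((n : ℝ≥0∞) + 2)).toReal = (n : ℝ) + 2 := by
      rw [ENNReal.toReal_add (by simp) (by simp)]; simp
    have e1 : ((((n : ℝ≥0∞) + 1) * (τ n : ℝ≥0∞))).toReal = ((n : ℝ) + 1) * (τ n : ℝ) := by
      rw [ENNReal.toReal_mul, e0]; simp
    have e2 : ((2 : ℝ≥0∞) * ((n : ℝ≥0∞) + 2)).toReal = 2 * ((n : ℝ) + 2) := by
      rw [ENNReal.toReal_mul, e0']; simp
    rwa [e1, e2] at h
  obtain ⟨n, hn⟩ := (h1.eventually_gt_atTop C.toReal).exists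
  exact absurd (hreal n) (not_le.mpr hn)
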